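/- Let δ ∈ (0,1) and set η = 1 + √(8 log(1/δ)). Let t_1,…,t_c be c i.i.d. random indices in {1,…,n}, each distributed according to P, and let H̃_km = (1/c) Σ_{j=1}^c X_{t_j}. Then with probability at least 1 − δ, |H_km − H̃_km| ≤ (η/√c) ||v_k|| ||v_m||. -/

import Mathlib

open Finset


lemma sum_prod_fn {n c : ℕ} (g : Fin c → Fin n → ℝ) :
    ∑ t : Fin c → Fin n, ∏ j, g j (t j) = ∏ j, ∑ i, g j i :=
  (Fintype.prod_sum g).symm

lemma sum_prod_const {n c : ℕ} (g : Fin n → ℝ) :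
    ∑ t : Fin c → Fin n, ∏ j, g (t j) = (∑ i, g i) ^ c :=
  (Fintype.sum_pow g c).symm

lemma second_moment {n c : ℕ} (w Z : Fin n → ℝ)
    (hw1 : ∑ i, w i = 1) (hmean : ∑ i, w i * Z i = 0) :
    ∑ t : Fin c → Fin n, (∏ j, w (t j)) * (∑ j, Z (t j)) ^ 2
      = c * ∑ i, w i * Z i ^ 2 := by
  have key : ∀ j k : Fin c,
      (∑ t : Fin c → Fin n, (∏ m, w (t m)) * (Z (t j) * Z (t k)))
        = if j = k then ∑ i, w i * Z i ^ 2 else 0 := by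
    intro j k
    have h1 : ∀ t : Fin c → Fin n,
        (∏ m, w (t m)) * (Z (t j) * Z (t k))
          = ∏ m, (w (t m) * ((if m = j then Z (t m) else 1) * (if m = k then Z (t m) else 1))) := by
      intro t
      have e1 : (∏ m, (if m = j then Z (t m) else 1)) = Z (t j) := by simp
      have e2 : (∏ m, (if m = k then Z (t m) else 1)) = Z (t k) := by simp
      rw [Finset.prod_mul_distrib, Finset.prod_mul_distrib, e1, e2]
    have h2 : (∑ t : Fin c → Fin n, (∏ m, w (t m)) * (Z (t j) * Z (t k)))
        = ∏ m, ∑ i, (w i * ((if m = j then Z i else 1) * (if m = k then Z i else 1))) := by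
      simp_rw [h1]
      exact sum_prod_fn (fun m i => w i * ((if m = j then Z i else 1) * (if m = k then Z i else 1)))
    rw [h2]
    by_cases hjk : j = k
    · subst hjk
      rw [if_pos rfl]
      have h3 : ∀ m : Fin c, (∑ i, (w i * ((if m = j then Z i else 1) * (if m = j then Z i else 1))))
          = if m = j then (∑ i, w i * Z i ^ 2) else 1 := by
        intro m
        by_cases hm : m = j
        · subst hm
          rw [if_pos rfl]
          apply Finset.sum_congr rfl
          intro i _
          rw [if_pos rfl]
          ring
        · rw [if_neg hm]
          have : ∀ i, w i * ((if m = j then Z i else 1) * (if m = j then Z i else 1)) = w i := by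
            intro i; rw [if_neg hm]; ring
          simp_rw [this]
          exact hw1
      simp_rw [h3]
      simp
    · rw [if_neg hjk]
      apply Finset.prod_eq_zero (Finset.mem_univ j)
      have h4 : ∀ i, w i * ((if (j:Fin c) = j then Z i else 1) * (if j = k then Z i else 1)) = w i * Z i := by
        intro i; rw [if_pos rfl, if_neg hjk]; ring
      exact (Finset.sum_congr rfl (fun i _ => h4 i)).trans hmean
  calc ∑ t : Fin c → Fin n, (∏ j, w (t j)) * (∑ j, Z (t j)) ^ 2
      = ∑ t : Fin c → Fin n, ∑ j, ∑ k, (∏ m, w (t m)) * (Z (t j) * Z (t k)) := by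
        apply Finset.sum_congr rfl; intro t _
        rw [sq, Finset.sum_mul_sum]
        rw [Finset.mul_sum]
        apply Finset.sum_congr rfl; intro j _
        rw [Finset.mul_sum]
    _ = ∑ j : Fin c, ∑ t : Fin c → Fin n, ∑ k, (∏ m, w (t m)) * (Z (t j) * Z (t k)) :=
        Finset.sum_comm
    _ = ∑ j : Fin c, ∑ k : Fin c, ∑ t : Fin c → Fin n, (∏ m, w (t m)) * (Z (t j) * Z (t k)) :=
        Finset.sum_congr rfl (fun j _ => Finset.sum_comm)
    _ = ∑ j : Fin c, ∑ k : Fin c, if j = k then ∑ i, w i * Z i ^ 2 else 0 := by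
        simp_rw [key]
    _ = c * ∑ i, w i * Z i ^ 2 := by
        simp [Finset.sum_ite_eq, mul_comm]


lemma chernoff_tail {n c : ℕ} (w Z : Fin n → ℝ) (hw : ∀ i, 0 ≤ w i)
    (a lam : ℝ) (hlam : 0 ≤ lam) :
    ∑ t ∈ Finset.univ.filter (fun t : Fin c → Fin n => a < ∑ j, Z (t j)), ∏ j, w (t j)
      ≤ Real.exp (-(lam * a)) * (∑ i, w i * Real.exp (lam * Z i)) ^ c := by
  have hterm : ∀ t : Fin c → Fin n, 0 ≤ ∏ j, w (t j) :=
    fun t => Finset.prod_nonneg fun j _ => hw _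
  calc ∑ t ∈ Finset.univ.filter (fun t : Fin c → Fin n => a < ∑ j, Z (t j)), ∏ j, w (t j)
      ≤ ∑ t ∈ Finset.univ.filter (fun t : Fin c → Fin n => a < ∑ j, Z (t j)),
          (∏ j, w (t j)) * Real.exp (lam * (∑ j, Z (t j)) - lam * a) := by
        apply Finset.sum_le_sum
        intro t ht
        have h := (Finset.mem_filter.mp ht).2
        have h0 : 0 ≤ lam * (∑ j, Z (t j)) - lam * a := by nlinarith
        exact le_mul_of_one_le_right (hterm t) (Real.one_le_exp h0)
    _ ≤ ∑ t : Fin c → Fin n, (∏ j, w (t j)) * Real.exp (lam * (∑ j, Z (t j)) - lam * a) :=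
        Finset.sum_le_sum_of_subset_of_nonneg (Finset.filter_subset _ _)
          (fun t _ _ => mul_nonneg (hterm t) (Real.exp_pos _).le)
    _ = Real.exp (-(lam * a)) * ∑ t : Fin c → Fin n, ∏ j, (w (t j) * Real.exp (lam * Z (t j))) := by
        rw [Finset.mul_sum]
        apply Finset.sum_congr rfl
        intro t _
        rw [Finset.prod_mul_distrib, ← Real.exp_sum, ← Finset.mul_sum,
          sub_eq_add_neg, add_comm, Real.exp_add]
        ring
    _ = Real.exp (-(lam * a)) * (∑ i, w i * Real.exp (lam * Z i)) ^ c := by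
        rw [sum_prod_const (fun i => w i * Real.exp (lam * Z i))]

lemma cheb_tail {n c : ℕ} (w Z : Fin n → ℝ) (hw : ∀ i, 0 ≤ w i)
    (hw1 : ∑ i, w i = 1) (hmean : ∑ i, w i * Z i = 0)
    (a : ℝ) (ha : 0 < a) :
    ∑ t ∈ Finset.univ.filter (fun t : Fin c → Fin n => a < |∑ j, Z (t j)|), ∏ j, w (t j)
      ≤ c * (∑ i, w i * Z i ^ 2) / a ^ 2 := by
  have hterm : ∀ t : Fin c → Fin n, 0 ≤ ∏ j, w (t j) :=
    fun t => Finset.prod_nonneg fun j _ => hw _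
  calc ∑ t ∈ Finset.univ.filter (fun t : Fin c → Fin n => a < |∑ j, Z (t j)|), ∏ j, w (t j)
      ≤ ∑ t ∈ Finset.univ.filter (fun t : Fin c → Fin n => a < |∑ j, Z (t j)|),
          (∏ j, w (t j)) * ((∑ j, Z (t j)) ^ 2 / a ^ 2) := by
        apply Finset.sum_le_sum
        intro t ht
        have h := (Finset.mem_filter.mp ht).2
        have h2 : a ^ 2 ≤ (∑ j, Z (t j)) ^ 2 := by
          nlinarith [sq_abs (∑ j, Z (t j)), abs_nonneg (∑ j, Z (t j))]
        exact le_mul_of_one_le_right (hterm t)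
          ((one_le_div (by positivity)).mpr h2)
    _ ≤ ∑ t : Fin c → Fin n, (∏ j, w (t j)) * ((∑ j, Z (t j)) ^ 2 / a ^ 2) :=
        Finset.sum_le_sum_of_subset_of_nonneg (Finset.filter_subset _ _)
          (fun t _ _ => mul_nonneg (hterm t) (by positivity))
    _ = (∑ t : Fin c → Fin n, (∏ j, w (t j)) * (∑ j, Z (t j)) ^ 2) / a ^ 2 := by
        rw [Finset.sum_div]
        apply Finset.sum_congr rfl
        intro t _
        rw [mul_div_assoc]
    _ = c * (∑ i, w i * Z i ^ 2) / a ^ 2 := by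
        rw [second_moment w Z hw1 hmean]

lemma mgf_bound {n : ℕ} (w Z : Fin n → ℝ) (hw : ∀ i, 0 ≤ w i)
    (hw1 : ∑ i, w i = 1) (hmean : ∑ i, w i * Z i = 0) (V : ℝ)
    (hvar : ∑ i, w i * Z i ^ 2 ≤ V) (hV : 0 ≤ V)
    (lam : ℝ) (hbd : ∀ i, |lam * Z i| ≤ 1) :
    ∑ i, w i * Real.exp (lam * Z i) ≤ Real.exp (lam ^ 2 * V) := by
  have h1 : ∀ i : Fin n, Real.exp (lam * Z i) ≤ 1 + lam * Z i + (lam * Z i) ^ 2 := by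
    intro i
    have hb := Real.exp_bound (hbd i) (n := 2) (by norm_num)
    have hsum : ∑ m ∈ Finset.range 2, (lam * Z i) ^ m / (Nat.factorial m : ℝ) = 1 + lam * Z i := by
      simp [Finset.sum_range_succ]
    rw [hsum] at hb
    have habs := abs_le.mp hb
    have hsq : |lam * Z i| ^ 2 = (lam * Z i) ^ 2 := sq_abs _
    have : ((Nat.succ 2 : ℕ) : ℝ) / ((Nat.factorial 2 : ℕ) * (2:ℕ) : ℝ) = 3 / 4 := by
      norm_num [Nat.factorial]
    nlinarith [sq_nonneg (lam * Z i), habs.2]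
  calc ∑ i, w i * Real.exp (lam * Z i)
      ≤ ∑ i, w i * (1 + lam * Z i + (lam * Z i) ^ 2) :=
        Finset.sum_le_sum fun i _ => mul_le_mul_of_nonneg_left (h1 i) (hw i)
    _ = (∑ i, w i) + lam * (∑ i, w i * Z i) + lam ^ 2 * (∑ i, w i * Z i ^ 2) := by
        rw [Finset.mul_sum, Finset.mul_sum, ← Finset.sum_add_distrib, ← Finset.sum_add_distrib]
        apply Finset.sum_congr rfl
        intro i _
        ring
    _ = 1 + lam ^ 2 * (∑ i, w i * Z i ^ 2) := by rw [hw1, hmean]; ring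
    _ ≤ 1 + lam ^ 2 * V := by nlinarith [sq_nonneg lam]
    _ ≤ Real.exp (lam ^ 2 * V) := by nlinarith [Real.add_one_le_exp (lam ^ 2 * V)]



lemma eta_delta_bound (δ : ℝ) (hδ0 : 0 < δ) (hδ1 : δ < 1) (hδ2 : 1/2 ≤ δ) :
    1 ≤ (1 + Real.sqrt (8 * Real.log (1/δ)))^2 * δ := by
  have hL0 : 0 ≤ Real.log (1/δ) := Real.log_nonneg (by rw [le_div_iff₀ hδ0]; linarith)
  have hL2 : Real.log (1/δ) ≤ Real.log 2 := by
    apply Real.log_le_log (by positivity)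
    rw [div_le_iff₀ hδ0]; linarith
  have hL7 : Real.log (1/δ) ≤ 0.7 := by
    have := Real.log_two_lt_d9; linarith
  have hδge : 1 - Real.log (1/δ) ≤ δ := by
    have h1 := Real.add_one_le_exp (-(Real.log (1/δ)))
    rw [Real.exp_neg, Real.exp_log (by positivity : (0:ℝ) < 1/δ)] at h1
    have h2 : ((1:ℝ)/δ)⁻¹ = δ := by field_simp
    rw [h2] at h1
    linarith
  have hs0 : 0 ≤ Real.sqrt (8 * Real.log (1/δ)) := Real.sqrt_nonneg _
  have hs2 : Real.sqrt (8 * Real.log (1/δ)) ^ 2 = 8 * Real.log (1/δ) :=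
    Real.sq_sqrt (by linarith)
  set L := Real.log (1/δ) with hLdef
  set s := Real.sqrt (8 * L) with hsdef
  have h3 : 0 ≤ s * (1 - L) := mul_nonneg hs0 (by linarith)
  have h4 : 0 ≤ L * (7 - 8*L) := mul_nonneg hL0 (by linarith)
  have h7 : (s^2 - 8*L) * (1 - L) = 0 := by rw [hs2]; ring
  have h6 : 1 ≤ (1 + s)^2 * (1 - L) := by nlinarith [h3, h4, h7]
  have h2 := mul_le_mul_of_nonneg_left hδge (sq_nonneg (1 + s))
  nlinarith [h6, h2]

lemma eta_log_bound (δ : ℝ) (hδ0 : 0 < δ) (hδ2 : δ < 1/2) :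
    16 * (Real.log (1/δ) + Real.log 2) ≤ 3 * (1 + Real.sqrt (8 * Real.log (1/δ)))^2 := by
  have hLlog2 : Real.log 2 ≤ Real.log (1/δ) := by
    apply Real.log_le_log two_pos
    rw [le_div_iff₀ hδ0]; linarith
  have hL0 : (0:ℝ) < Real.log (1/δ) := lt_of_lt_of_le (Real.log_pos (by norm_num)) hLlog2
  have hs2 : Real.sqrt (8 * Real.log (1/δ)) ^ 2 = 8 * Real.log (1/δ) :=
    Real.sq_sqrt (by nlinarith [Real.log_two_gt_d9])
  have hs0 : 0 ≤ Real.sqrt (8 * Real.log (1/δ)) := Real.sqrt_nonneg _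
  have hsge2 : 2 ≤ Real.sqrt (8 * Real.log (1/δ)) := by
    nlinarith [hs2, hs0, Real.log_two_gt_d9]
  set L := Real.log (1/δ) with hLdef
  set s := Real.sqrt (8 * L) with hsdef
  have hlog2 : Real.log 2 < 0.6931471808 := Real.log_two_lt_d9
  nlinarith [hs2, hsge2, hLlog2, hlog2]

set_option maxHeartbeats 2000000 in
/-- High-probability bound for the `c`-sample estimator: with `η = 1 + √(8 log(1/δ))`,
the event `|H_km − H̃_km| ≤ (η/√c) ‖v_k‖ ‖v_m‖` has probability at least `1 − δ` under the
product distribution of `c` i.i.d. samples drawn from `P`. -/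
theorem fmc_high_probability_bound
    {n d c : ℕ} (hn : 0 < n) (hd : 0 < d) (hc : 0 < c)
    (δ : ℝ) (hδ0 : 0 < δ) (hδ1 : δ < 1)
    (η : ℝ) (hη : η = 1 + Real.sqrt (8 * Real.log (1 / δ)))
    (vk vm : Fin n → EuclideanSpace ℝ (Fin d))
    (S : ℝ) (hS : S = ∑ j, ‖vk j‖ * ‖vm j‖) (hSpos : 0 < S)
    (P : Fin n → ℝ) (hP : ∀ t, P t = ‖vk t‖ * ‖vm t‖ / S)
    (X : Fin n → ℝ)
    (hX : ∀ t, X t = if 0 < P t then (inner ℝ (vk t) (vm t) : ℝ) / P t else 0)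
    (Hkm : ℝ) (hH : Hkm = ∑ i, (inner ℝ (vk i) (vm i) : ℝ))
    (est : (Fin c → Fin n) → ℝ)
    (hest : ∀ t, est t = (1 / (c : ℝ)) * ∑ j, X (t j)) :
    1 - δ ≤
      ∑ t ∈ Finset.univ.filter (fun t : Fin c → Fin n =>
          |Hkm - est t| ≤ (η / Real.sqrt c) *
            (Real.sqrt (∑ i, ‖vk i‖ ^ 2) * Real.sqrt (∑ i, ‖vm i‖ ^ 2))),
        ∏ j, P (t j) := by
  have hcR : (0:ℝ) < c := by exact_mod_cast hc
  have hcne : (c:ℝ) ≠ 0 := hcR.ne'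
  set S' := Real.sqrt (∑ i, ‖vk i‖ ^ 2) * Real.sqrt (∑ i, ‖vm i‖ ^ 2) with hS'
  set ε := (η / Real.sqrt c) * S' with hε
  clear_value S' ε
  -- basic facts
  have hCS : S ≤ S' := by
    rw [hS, hS']
    exact Real.sum_mul_le_sqrt_mul_sqrt Finset.univ (fun i => ‖vk i‖) (fun i => ‖vm i‖)
  have hS'pos : 0 < S' := lt_of_lt_of_le hSpos hCS
  have hL0 : 0 ≤ Real.log (1/δ) := Real.log_nonneg (by rw [le_div_iff₀ hδ0]; linarith)
  have hη1 : (1:ℝ) ≤ η := by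
    rw [hη]; nlinarith [Real.sqrt_nonneg (8 * Real.log (1/δ))]
  have hεpos : 0 < ε := by
    rw [hε]
    exact mul_pos (div_pos (by linarith) (Real.sqrt_pos.mpr hcR)) hS'pos
  have hPnn : ∀ i, 0 ≤ P i := by
    intro i; rw [hP]; positivity
  have hPsum : ∑ i, P i = 1 := by
    rw [Finset.sum_congr rfl fun i _ => hP i, ← Finset.sum_div, ← hS, div_self hSpos.ne']
  have hSP : ∀ i, S * P i = ‖vk i‖ * ‖vm i‖ := by
    intro i; rw [hP]; field_simp
  have hinner : ∀ i, |(inner ℝ (vk i) (vm i) : ℝ)| ≤ S * P i := by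
    intro i; rw [hSP]; exact abs_real_inner_le_norm _ _
  have hXbd : ∀ i, |X i| ≤ S := by
    intro i; rw [hX]; split_ifs with h
    · rw [abs_div, abs_of_pos h, div_le_iff₀ h]; exact hinner i
    · simpa using hSpos.le
  have hPX : ∀ i, P i * X i = (inner ℝ (vk i) (vm i) : ℝ) := by
    intro i; rw [hX]; split_ifs with h
    · field_simp
    · have hP0 : P i = 0 := le_antisymm (not_lt.mp h) (hPnn i)
      have h0 : |(inner ℝ (vk i) (vm i) : ℝ)| ≤ 0 := by
        have := hinner i; rw [hP0, mul_zero] at this; exact this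
      have h1 : (inner ℝ (vk i) (vm i) : ℝ) = 0 := abs_nonpos_iff.mp h0
      rw [h1, mul_zero]
  have hmu : ∑ i, P i * X i = Hkm := by
    rw [hH]; exact Finset.sum_congr rfl fun i _ => hPX i
  have hHbd : |Hkm| ≤ S := by
    rw [hH]
    calc |∑ i, (inner ℝ (vk i) (vm i) : ℝ)| ≤ ∑ i, |(inner ℝ (vk i) (vm i) : ℝ)| :=
          Finset.abs_sum_le_sum_abs _ _
      _ ≤ ∑ i, S * P i := Finset.sum_le_sum fun i _ => hinner i
      _ = S := by rw [← Finset.mul_sum, hPsum, mul_one]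
  have hvarX : ∑ i, P i * X i ^ 2 ≤ S ^ 2 := by
    calc ∑ i, P i * X i ^ 2 ≤ ∑ i, P i * S ^ 2 := by
          apply Finset.sum_le_sum
          intro i _
          apply mul_le_mul_of_nonneg_left _ (hPnn i)
          nlinarith [abs_le.mp (hXbd i)]
      _ = S ^ 2 := by rw [← Finset.sum_mul, hPsum, one_mul]
  -- centered variables
  have hZp_mean : ∑ i, P i * (Hkm - X i) = 0 := by
    simp_rw [mul_sub]
    rw [Finset.sum_sub_distrib, ← Finset.sum_mul, hPsum, one_mul, hmu, sub_self]
  have hZm_mean : ∑ i, P i * (X i - Hkm) = 0 := by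
    simp_rw [mul_sub]
    rw [Finset.sum_sub_distrib, ← Finset.sum_mul, hPsum, one_mul, hmu, sub_self]
  have hZp_var : ∑ i, P i * (Hkm - X i) ^ 2 ≤ S ^ 2 := by
    have h1 : ∀ i : Fin n, P i * (Hkm - X i) ^ 2
        = P i * X i ^ 2 - 2 * Hkm * (P i * X i) + Hkm ^ 2 * P i := fun i => by ring
    calc ∑ i, P i * (Hkm - X i) ^ 2
        = ∑ i, (P i * X i ^ 2 - 2 * Hkm * (P i * X i) + Hkm ^ 2 * P i) :=
          Finset.sum_congr rfl fun i _ => h1 i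
      _ = (∑ i, P i * X i ^ 2) - 2 * Hkm * (∑ i, P i * X i) + Hkm ^ 2 * (∑ i, P i) := by
          rw [Finset.sum_add_distrib, Finset.sum_sub_distrib, ← Finset.mul_sum, ← Finset.mul_sum]
      _ ≤ S ^ 2 := by rw [hmu, hPsum]; nlinarith [hvarX, sq_nonneg Hkm]
  have hZm_var : ∑ i, P i * (X i - Hkm) ^ 2 ≤ S ^ 2 := by
    have h1 : ∀ i : Fin n, P i * (X i - Hkm) ^ 2 = P i * (Hkm - X i) ^ 2 := fun i => by ring
    rw [Finset.sum_congr rfl fun i _ => h1 i]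
    exact hZp_var
  have hZpbd : ∀ i, |Hkm - X i| ≤ 2 * S := by
    intro i
    have h1 := abs_le.mp hHbd
    have h2 := abs_le.mp (hXbd i)
    rw [abs_le]; constructor <;> linarith
  have hZmbd : ∀ i, |X i - Hkm| ≤ 2 * S := by
    intro i
    have h1 := abs_le.mp hHbd
    have h2 := abs_le.mp (hXbd i)
    rw [abs_le]; constructor <;> linarith
  have hsumZp : ∀ t : Fin c → Fin n, ∑ j, (Hkm - X (t j)) = (c:ℝ) * (Hkm - est t) := by
    intro t
    rw [hest t, Finset.sum_sub_distrib]
    simp only [Finset.sum_const, Finset.card_univ, Fintype.card_fin, nsmul_eq_mul]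
    field_simp
  have hsumZm : ∀ t : Fin c → Fin n, ∑ j, (X (t j) - Hkm) = (c:ℝ) * (est t - Hkm) := by
    intro t
    rw [hest t, Finset.sum_sub_distrib]
    simp only [Finset.sum_const, Finset.card_univ, Fintype.card_fin, nsmul_eq_mul]
    field_simp
  have htotal : ∑ t : Fin c → Fin n, ∏ j, P (t j) = 1 := by
    rw [sum_prod_const P, hPsum, one_pow]
  have hprodnn : ∀ t : Fin c → Fin n, 0 ≤ ∏ j, P (t j) :=
    fun t => Finset.prod_nonneg fun j _ => hPnn _
  suffices hbad : ∑ t ∈ Finset.univ.filter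
      (fun t : Fin c → Fin n => ¬ (|Hkm - est t| ≤ ε)), ∏ j, P (t j) ≤ δ by
    have htot := Finset.sum_filter_add_sum_filter_not (Finset.univ : Finset (Fin c → Fin n))
      (fun t => |Hkm - est t| ≤ ε) (fun t => ∏ j, P (t j))
    rw [htotal] at htot
    linarith
  by_cases hδ2 : 1/2 ≤ δ
  · -- Chebyshev regime
    have hcε2 : (c:ℝ) * ε ^ 2 = η ^ 2 * S' ^ 2 := by
      rw [hε, mul_pow, div_pow, Real.sq_sqrt hcR.le]
      field_simp
    have hηδ : 1 ≤ η ^ 2 * δ := by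
      rw [hη]; exact eta_delta_bound δ hδ0 hδ1 hδ2
    have hsubset : Finset.univ.filter (fun t : Fin c → Fin n => ¬ (|Hkm - est t| ≤ ε))
        ⊆ Finset.univ.filter (fun t : Fin c → Fin n => (c:ℝ) * ε < |∑ j, (Hkm - X (t j))|) := by
      intro t ht
      simp only [Finset.mem_filter, Finset.mem_univ, true_and] at ht ⊢
      rw [hsumZp t, abs_mul, abs_of_pos hcR]
      exact (mul_lt_mul_iff_right₀ hcR).mpr (not_le.mp ht)
    have hcheb := cheb_tail (c := c) P (fun i => Hkm - X i) hPnn hPsum hZp_mean ((c:ℝ)*ε) (by positivity)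
    calc ∑ t ∈ Finset.univ.filter (fun t : Fin c → Fin n => ¬ (|Hkm - est t| ≤ ε)), ∏ j, P (t j)
        ≤ ∑ t ∈ Finset.univ.filter
            (fun t : Fin c → Fin n => (c:ℝ)*ε < |∑ j, (Hkm - X (t j))|), ∏ j, P (t j) :=
          Finset.sum_le_sum_of_subset_of_nonneg hsubset (fun t _ _ => hprodnn t)
      _ ≤ (c:ℝ) * (∑ i, P i * (Hkm - X i) ^ 2) / ((c:ℝ)*ε)^2 := hcheb
      _ ≤ δ := by
          rw [div_le_iff₀ (by positivity)]
          have h1 : ((c:ℝ)*ε)^2 = (c:ℝ) * (η^2 * S'^2) := by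
            rw [mul_pow, ← hcε2]; ring
          rw [h1]
          have hA : (c:ℝ) * (∑ i, P i * (Hkm - X i) ^ 2) ≤ (c:ℝ) * S^2 :=
            mul_le_mul_of_nonneg_left hZp_var hcR.le
          have hB : S^2 ≤ S'^2 := by nlinarith
          have hC : S'^2 ≤ δ * (η^2*S'^2) := by
            nlinarith [mul_nonneg (sq_nonneg S') (by linarith : (0:ℝ) ≤ η^2*δ - 1)]
          nlinarith [hA, mul_le_mul_of_nonneg_left (hB.trans hC) hcR.le]
  · push_neg at hδ2
    by_cases hε2S : ε ≤ 2*S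
    · -- Chernoff regime
      set lam := ε / (4*S^2) with hlam
      clear_value lam
      have hlam0 : 0 ≤ lam := le_of_lt (by rw [hlam]; positivity)
      have hbd : ∀ (Z : Fin n → ℝ), (∀ i, |Z i| ≤ 2*S) → ∀ i, |lam * Z i| ≤ 1 := by
        intro Z hZ i
        rw [abs_mul, abs_of_nonneg hlam0]
        calc lam * |Z i| ≤ lam * (2*S) := mul_le_mul_of_nonneg_left (hZ i) hlam0
          _ ≤ 1 := by
              rw [hlam, div_mul_eq_mul_div, div_le_one (by positivity)]
              nlinarith
      have hcε2 : (c:ℝ) * ε ^ 2 = η ^ 2 * S' ^ 2 := by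
        rw [hε, mul_pow, div_pow, Real.sq_sqrt hcR.le]
        field_simp
      have hkey : Real.log (1/δ) + Real.log 2 ≤ 3*(c:ℝ)*ε^2/(16*S^2) := by
        rw [le_div_iff₀ (by positivity)]
        have hη2 : 16 * (Real.log (1/δ) + Real.log 2) ≤ 3 * η^2 := by
          rw [hη]; exact eta_log_bound δ hδ0 hδ2
        have h1 : η^2 * S^2 ≤ (c:ℝ) * ε^2 := by
          rw [hcε2]
          have hB2 : S^2 ≤ S'^2 := by nlinarith [hSpos, hCS]
          exact mul_le_mul_of_nonneg_left hB2 (sq_nonneg η)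
        nlinarith [mul_le_mul_of_nonneg_right hη2 (sq_nonneg S),
          mul_le_mul_of_nonneg_left h1 (by norm_num : (0:ℝ) ≤ 3)]
      have htail : ∀ (Z : Fin n → ℝ), (∑ i, P i * Z i = 0) → (∑ i, P i * Z i ^ 2 ≤ S ^ 2) →
          (∀ i, |Z i| ≤ 2*S) →
          ∑ t ∈ Finset.univ.filter (fun t : Fin c → Fin n => (c:ℝ)*ε < ∑ j, Z (t j)),
            ∏ j, P (t j) ≤ δ/2 := by
        intro Z hm hv hb
        have h2 := mgf_bound P Z hPnn hPsum hm (S^2) hv (sq_nonneg S) lam (hbd Z hb)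
        calc ∑ t ∈ Finset.univ.filter (fun t : Fin c → Fin n => (c:ℝ)*ε < ∑ j, Z (t j)),
              ∏ j, P (t j)
            ≤ Real.exp (-(lam * ((c:ℝ)*ε))) * (∑ i, P i * Real.exp (lam * Z i)) ^ c :=
              chernoff_tail P Z hPnn ((c:ℝ)*ε) lam hlam0
          _ ≤ Real.exp (-(lam * ((c:ℝ)*ε))) * (Real.exp (lam^2 * S^2)) ^ c := by
              apply mul_le_mul_of_nonneg_left _ (Real.exp_pos _).le
              exact pow_le_pow_left₀ (Finset.sum_nonneg fun i _ =>
                mul_nonneg (hPnn i) (Real.exp_pos _).le) h2 c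
          _ = Real.exp ((c:ℝ) * (lam^2 * S^2) - lam * ((c:ℝ)*ε)) := by
              rw [← Real.exp_nat_mul, ← Real.exp_add]
              congr 1
              ring
          _ ≤ δ/2 := by
              have hexp_eq : (c:ℝ) * (lam^2 * S^2) - lam * ((c:ℝ)*ε)
                  = -(3*(c:ℝ)*ε^2/(16*S^2)) := by
                rw [hlam]; field_simp; ring
              rw [hexp_eq]
              have h3 : Real.exp (-(3*(c:ℝ)*ε^2/(16*S^2)))
                  ≤ Real.exp (-(Real.log (1/δ) + Real.log 2)) :=
                Real.exp_le_exp.mpr (by linarith)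
              have h4 : Real.exp (-(Real.log (1/δ) + Real.log 2)) = δ/2 := by
                rw [neg_add, Real.exp_add, Real.exp_neg, Real.exp_neg,
                  Real.exp_log (by positivity : (0:ℝ) < 1/δ), Real.exp_log two_pos,
                  one_div, inv_inv, ← div_eq_mul_inv]
              linarith
      have himp : ∀ t : Fin c → Fin n, ¬ (|Hkm - est t| ≤ ε) →
          ((c:ℝ)*ε < ∑ j, (Hkm - X (t j))) ∨ ((c:ℝ)*ε < ∑ j, (X (t j) - Hkm)) := by
        intro t ht
        rw [hsumZp t, hsumZm t]
        rcases lt_abs.mp (not_le.mp ht) with h | h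
        · exact Or.inl ((mul_lt_mul_iff_right₀ hcR).mpr h)
        · exact Or.inr ((mul_lt_mul_iff_right₀ hcR).mpr (by linarith))
      have hsplit := Finset.sum_filter_add_sum_filter_not
        (Finset.univ.filter (fun t : Fin c → Fin n => ¬ (|Hkm - est t| ≤ ε)))
        (fun t => (c:ℝ)*ε < ∑ j, (Hkm - X (t j))) (fun t => ∏ j, P (t j))
      have hs1 : ∑ t ∈ (Finset.univ.filter (fun t : Fin c → Fin n => ¬ (|Hkm - est t| ≤ ε))).filter
            (fun t => (c:ℝ)*ε < ∑ j, (Hkm - X (t j))), ∏ j, P (t j)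
          ≤ ∑ t ∈ Finset.univ.filter
            (fun t : Fin c → Fin n => (c:ℝ)*ε < ∑ j, (Hkm - X (t j))), ∏ j, P (t j) := by
        apply Finset.sum_le_sum_of_subset_of_nonneg _ (fun t _ _ => hprodnn t)
        intro t ht
        simp only [Finset.mem_filter, Finset.mem_univ, true_and] at ht ⊢
        exact ht.2
      have hs2' : ∑ t ∈ (Finset.univ.filter (fun t : Fin c → Fin n => ¬ (|Hkm - est t| ≤ ε))).filter
            (fun t => ¬ ((c:ℝ)*ε < ∑ j, (Hkm - X (t j)))), ∏ j, P (t j)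
          ≤ ∑ t ∈ Finset.univ.filter
            (fun t : Fin c → Fin n => (c:ℝ)*ε < ∑ j, (X (t j) - Hkm)), ∏ j, P (t j) := by
        apply Finset.sum_le_sum_of_subset_of_nonneg _ (fun t _ _ => hprodnn t)
        intro t ht
        simp only [Finset.mem_filter, Finset.mem_univ, true_and] at ht ⊢
        rcases himp t ht.1 with h | h
        · exact absurd h ht.2
        · exact h
      have ht1 := htail (fun i => Hkm - X i) hZp_mean hZp_var hZpbd
      have ht2 := htail (fun i => X i - Hkm) hZm_mean hZm_var hZmbd
      linarith
    · -- trivial regime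
      push_neg at hε2S
      have hestbd : ∀ t : Fin c → Fin n, |est t| ≤ S := by
        intro t
        rw [hest t, abs_mul, abs_of_nonneg (by positivity : (0:ℝ) ≤ 1/(c:ℝ))]
        have h1 : |∑ j, X (t j)| ≤ (c:ℝ) * S := by
          calc |∑ j, X (t j)| ≤ ∑ j : Fin c, |X (t j)| := Finset.abs_sum_le_sum_abs _ _
            _ ≤ ∑ _j : Fin c, S := Finset.sum_le_sum fun j _ => hXbd _
            _ = (c:ℝ) * S := by
                simp only [Finset.sum_const, Finset.card_univ, Fintype.card_fin, nsmul_eq_mul]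
        calc (1/(c:ℝ)) * |∑ j, X (t j)| ≤ (1/(c:ℝ)) * ((c:ℝ)*S) :=
              mul_le_mul_of_nonneg_left h1 (by positivity)
          _ = S := by field_simp
      have hall : ∀ t : Fin c → Fin n, |Hkm - est t| ≤ ε := by
        intro t
        have h1 := abs_le.mp hHbd
        have h2 := abs_le.mp (hestbd t)
        rw [abs_le]; constructor <;> linarith
      have hBempty : Finset.univ.filter (fun t : Fin c → Fin n => ¬ (|Hkm - est t| ≤ ε)) = ∅ :=
        Finset.filter_eq_empty_iff.mpr (fun {t} _ => not_not_intro (hall t))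
      rw [hBempty, Finset.sum_empty]
      linarith
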